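/- Define v(z) = (exp(-2iz) - 1)/(exp(-2iz) + 1) and u(z) = i*v(z) + C₂. Then wherever exp(-2iz) ≠ -1 and v(z) ≠ 0, the pair (v, u) satisfies the system i v'(z) - u'(z) = 0 and i u'(z) + (d/dz)(1/v(z)) = (d/dz)(u'(z)/v(z)). -/

import Mathlib

open Complex

noncomputable def v (z : ℂ) : ℂ :=
  (Complex.exp (-2 * I * z) - 1) / (Complex.exp (-2 * I * z) + 1)

noncomputable def u (C₂ : ℂ) (z : ℂ) : ℂ := I * v z + C₂

lemma hasDerivAt_E (w : ℂ) :
    HasDerivAt (fun w => Complex.exp (-2 * I * w)) (Complex.exp (-2 * I * w) * (-2 * I)) w := by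
  have h : HasDerivAt (fun w : ℂ => -2 * I * w) (-2 * I) w := by
    simpa using (hasDerivAt_id w).const_mul (-2 * I)
  simpa using h.cexp

lemma hasDerivAt_v (w : ℂ) (hw : Complex.exp (-2 * I * w) + 1 ≠ 0) :
    HasDerivAt v (-4 * I * Complex.exp (-2 * I * w) / (Complex.exp (-2 * I * w) + 1) ^ 2) w := by
  have h := ((hasDerivAt_E w).sub_const 1).div ((hasDerivAt_E w).add_const 1) hw
  refine h.congr_deriv ?_
  field_simp
  ring

lemma hasDerivAt_u (C₂ w : ℂ) (hw : Complex.exp (-2 * I * w) + 1 ≠ 0) :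
    HasDerivAt (u C₂) (I * (-4 * I * Complex.exp (-2 * I * w) / (Complex.exp (-2 * I * w) + 1) ^ 2)) w := by
  exact ((hasDerivAt_v w hw).const_mul I).add_const C₂

lemma deriv_u_eq (C₂ w : ℂ) (hw : Complex.exp (-2 * I * w) + 1 ≠ 0) :
    deriv (u C₂) w = 4 * Complex.exp (-2 * I * w) / (Complex.exp (-2 * I * w) + 1) ^ 2 := by
  rw [(hasDerivAt_u C₂ w hw).deriv]
  linear_combination (-4 * Complex.exp (-2 * I * w) / (Complex.exp (-2 * I * w) + 1) ^ 2) * Complex.I_sq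

theorem navier_stokes_system (C₂ : ℂ) (z : ℂ)
    (h1 : Complex.exp (-2 * I * z) ≠ -1) (h2 : v z ≠ 0) :
    I * deriv v z - deriv (u C₂) z = 0 ∧
    I * deriv (u C₂) z + deriv (fun w => 1 / v w) z
      = deriv (fun w => deriv (u C₂) w / v w) z := by
  have hz : Complex.exp (-2 * I * z) + 1 ≠ 0 := by
    intro h; apply h1; linear_combination h
  have hvz : v z = (Complex.exp (-2 * I * z) - 1) / (Complex.exp (-2 * I * z) + 1) := rfl
  have he1 : Complex.exp (-2 * I * z) - 1 ≠ 0 := by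
    intro h
    apply h2
    rw [hvz, h, zero_div]
  have hv := hasDerivAt_v z hz
  have hu := hasDerivAt_u C₂ z hz
  have hinv : HasDerivAt (fun w => 1 / v w)
      ((0 * v z - 1 * (-4 * I * Complex.exp (-2 * I * z) / (Complex.exp (-2 * I * z) + 1) ^ 2))
        / (v z) ^ 2) z :=
    (hasDerivAt_const z (1 : ℂ)).div hv h2
  have hopen : IsOpen {w : ℂ | Complex.exp (-2 * I * w) + 1 ≠ 0} := by
    have hc : Continuous fun w : ℂ => Complex.exp (-2 * I * w) + 1 := by continuity
    exact isOpen_compl_singleton.preimage hc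
  have hev : (fun w => deriv (u C₂) w / v w)
      =ᶠ[nhds z] (fun w => (4 * Complex.exp (-2 * I * w) / (Complex.exp (-2 * I * w) + 1) ^ 2) / v w) := by
    filter_upwards [hopen.mem_nhds hz] with w hw
    rw [deriv_u_eq C₂ w hw]
  have hN : HasDerivAt (fun w => 4 * Complex.exp (-2 * I * w) / (Complex.exp (-2 * I * w) + 1) ^ 2)
      ((4 * (Complex.exp (-2 * I * z) * (-2 * I)) * (Complex.exp (-2 * I * z) + 1) ^ 2 -
        4 * Complex.exp (-2 * I * z) * ((2 : ℕ) * (Complex.exp (-2 * I * z) + 1) ^ 1 *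
          (Complex.exp (-2 * I * z) * (-2 * I)))) /
        ((Complex.exp (-2 * I * z) + 1) ^ 2) ^ 2) z :=
    ((hasDerivAt_E z).const_mul 4).div
      (((hasDerivAt_E z).add_const 1).pow 2) (pow_ne_zero 2 hz)
  have hQ := hN.div hv h2
  have hderivQ := hev.deriv_eq.trans hQ.deriv
  constructor
  · rw [hv.deriv, hu.deriv]
    ring
  · rw [hderivQ, deriv_u_eq C₂ z hz, hinv.deriv, hvz]
    generalize hE : Complex.exp (-2 * I * z) = E at hz he1 ⊢
    have hd : ((E - 1) / (E + 1)) ^ 2 ≠ 0 := pow_ne_zero 2 (div_ne_zero he1 hz)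
    rw [eq_div_iff hd, add_mul, div_mul_cancel₀ _ hd, div_pow, div_mul_div_comm]
    field_simp
    ring
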